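/- Let P be a caterpillar Datalog program over a type σ, and let (C, {ρ₁}, T) be the nondeterministic automaton over σ₂ whose states are the IDBs of P, with a transition (ρ_j, ρ_i) ∈ R^(n,m)(C) for each rule deriving a ∈ ρ_i from b ∈ ρ_j and a tuple in R whose m-th coordinate is a and n-th coordinate is b, with initial state ρ₁ and terminal states those IDBs appearing in goal rules. Then for every σ-structure B, the program P achieves its goal on B if and only if some word w accepted by (C, {ρ₁}, T) describes a caterpillar β*(P_w) admitting a homomorphism to B. -/

import Mathlib

/-! Basic framework: relational structures of a finite type `σ` with arities `ar`,
homomorphisms, the binary type/alphabet `σ₂`, the functors `β` and `β*`,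
path structures `P_w`, nondeterministic acceptance, and caterpillar notions. -/

/-- A `σ`-structure: a finite universe together with an `ar R`-ary relation for each `R ∈ σ`. -/
structure Str (σ : Type) (ar : σ → ℕ) : Type 1 where
  V : Type
  finiteV : Finite V
  rel : ∀ R : σ, Set ((Fin (ar R)) → V)

/-- The alphabet (and binary type) `σ₂`: a symbol `R^(i,j)` for each `R ∈ σ` of arity `k`
and each `(i,j) ∈ {1,…,k}²`. -/
abbrev Sig2 (σ : Type) (ar : σ → ℕ) : Type := Σ R : σ, Fin (ar R) × Fin (ar R)

/-- A `σ₂`-structure: a finite universe with a binary relation for each symbol of `σ₂`. -/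
structure Str2 (σ : Type) (ar : σ → ℕ) : Type 1 where
  V : Type
  finiteV : Finite V
  rel : Sig2 σ ar → Set (V × V)

variable {σ : Type} [Finite σ] {ar : σ → ℕ}

/-- Existence of a homomorphism between `σ`-structures. -/
def Str.Hom (A B : Str σ ar) : Prop :=
  ∃ f : A.V → B.V, ∀ (R : σ) (t : Fin (ar R) → A.V), t ∈ A.rel R → (fun i => f (t i)) ∈ B.rel R

/-- Existence of a homomorphism between `σ₂`-structures. -/
def Str2.Hom (X Y : Str2 σ ar) : Prop :=
  ∃ f : X.V → Y.V, ∀ (s : Sig2 σ ar) (p : X.V × X.V), p ∈ X.rel s → (f p.1, f p.2) ∈ Y.rel s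

/-- Isomorphism of `σ`-structures. -/
def Str.Iso (A B : Str σ ar) : Prop :=
  ∃ f : A.V ≃ B.V, ∀ (R : σ) (t : Fin (ar R) → A.V), t ∈ A.rel R ↔ (fun i => f (t i)) ∈ B.rel R

/-- The functor `β`: same universe, `(x_i, x_j) ∈ R^(i,j)(β B)` for each `(x_1,…,x_k) ∈ R(B)`. -/
def strBeta (B : Str σ ar) : Str2 σ ar where
  V := B.V
  finiteV := B.finiteV
  rel := fun s => { p | ∃ t ∈ B.rel s.1, t s.2.1 = p.1 ∧ t s.2.2 = p.2 }

/-- The carrier of `β*(X)⁺`: a copy of each element of `X` together with fresh elements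
`x_1, …, x_k` for each `(x,y) ∈ R^(i,j)(X)`. -/
abbrev PlusCarrier (X : Str2 σ ar) : Type :=
  X.V ⊕ Σ s : Sig2 σ ar, { p : X.V × X.V // p ∈ X.rel s } × Fin (ar s.1)

/-- The identifications generating `∼`: for `(x,y) ∈ R^(i,j)(X)`, identify `x_i` with `x`
and `x_j` with `y`. -/
inductive PreRel (X : Str2 σ ar) : PlusCarrier X → PlusCarrier X → Prop
  | left (s : Sig2 σ ar) (p : { p : X.V × X.V // p ∈ X.rel s }) :
      PreRel X (Sum.inr ⟨s, p, s.2.1⟩) (Sum.inl p.1.1)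
  | right (s : Sig2 σ ar) (p : { p : X.V × X.V // p ∈ X.rel s }) :
      PreRel X (Sum.inr ⟨s, p, s.2.2⟩) (Sum.inl p.1.2)

/-- The functor `β*`, left adjoint to `β`. -/
def strBetaStar (X : Str2 σ ar) : Str σ ar where
  V := Quot (PreRel X)
  finiteV := by
    have : Finite X.V := X.finiteV
    exact Finite.of_surjective (Quot.mk (PreRel X)) (fun q => Quot.exists_rep q)
  rel := fun R => { t | ∃ (i j : Fin (ar R)) (p : X.V × X.V) (hp : p ∈ X.rel ⟨R, (i, j)⟩),
      t = fun m => Quot.mk (PreRel X) (Sum.inr ⟨⟨R, (i, j)⟩, ⟨p, hp⟩, m⟩) }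

/-- The `σ₂`-path `P_w` of a word `w ∈ σ₂*`. -/
def PathStr (w : List (Sig2 σ ar)) : Str2 σ ar where
  V := Fin (w.length + 1)
  finiteV := inferInstance
  rel := fun s => { p | ∃ t : Fin w.length, w.get t = s ∧ p = (t.castSucc, t.succ) }

/-- Acceptance of the word `w` by the `σ₂`-structure `X` viewed as a nondeterministic
automaton with initial states `I` and terminal states `T`. -/
def NAccepts (X : Str2 σ ar) (I T : Set X.V) (w : List (Sig2 σ ar)) : Prop :=
  ∃ f : Fin (w.length + 1) → X.V,
    (∀ (s : Sig2 σ ar) (p : Fin (w.length + 1) × Fin (w.length + 1)),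
        p ∈ (PathStr w).rel s → (f p.1, f p.2) ∈ X.rel s) ∧
    f 0 ∈ I ∧ f (Fin.last w.length) ∈ T

/-! Caterpillars. -/

/-- The blocks (hyperedges) of a `σ`-structure. -/
def Str.Block (A : Str σ ar) : Type := Σ R : σ, { t : Fin (ar R) → A.V // t ∈ A.rel R }

/-- The underlying simple graph of the incidence multigraph `Inc(A)`. -/
def IncGraph (A : Str σ ar) : SimpleGraph (A.V ⊕ A.Block) :=
  SimpleGraph.fromRel (fun u v =>
    ∃ (b : A.Block) (i : Fin (ar b.1)), u = Sum.inl (b.2.1 i) ∧ v = Sum.inr b)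

/-- `a` is a leaf when it has degree one in `Inc(A)`, i.e. there is exactly one
incidence `(block, coordinate)` at `a`. -/
def Str.IsLeaf (A : Str σ ar) (a : A.V) : Prop :=
  Nat.card { e : Σ b : A.Block, Fin (ar b.1) // e.1.2.1 e.2 = a } = 1

/-- A block is pendant when it is incident to at most one non-leaf. -/
def Str.IsPendant (A : Str σ ar) (b : A.Block) : Prop :=
  Set.Subsingleton { a : A.V | ¬ A.IsLeaf a ∧ ∃ i, b.2.1 i = a }

/-- A `σ`-tree: the incidence multigraph is connected, has no cycles and no parallel edges. -/
def Str.IsTreeStr (A : Str σ ar) : Prop :=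
  (∀ b : A.Block, Function.Injective b.2.1) ∧ (IncGraph A).IsTree

/-- A `σ`-path: a `σ`-tree with at most two pendant blocks. -/
def Str.IsPathStr (A : Str σ ar) : Prop :=
  A.IsTreeStr ∧ Nat.card { b : A.Block // A.IsPendant b } ≤ 2

/-- The vertices removed when pruning: leaves attached to pendant blocks only. -/
def Str.Removed (A : Str σ ar) (a : A.V) : Prop :=
  A.IsLeaf a ∧ ∀ b : A.Block, (∃ i, b.2.1 i = a) → A.IsPendant b

/-- The structure obtained by removing all pendant blocks and the leaves attached to them. -/
def prune (A : Str σ ar) : Str σ ar where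
  V := { a : A.V // ¬ A.Removed a }
  finiteV := by have : Finite A.V := A.finiteV; exact inferInstance
  rel := fun R => { t | ∃ (t₀ : Fin (ar R) → A.V) (h₀ : t₀ ∈ A.rel R),
      ¬ A.IsPendant ⟨R, t₀, h₀⟩ ∧ ∀ i, (t i : A.V) = t₀ i }

/-- A `σ`-caterpillar: a `σ`-tree which is a path or becomes one after removing all
pendant blocks and the leaves attached to them. -/
def Str.IsCaterpillar (A : Str σ ar) : Prop :=
  A.IsTreeStr ∧ (A.IsPathStr ∨ (prune A).IsPathStr)

/-! Dualities. -/

/-- `(O, A)` is a homomorphism duality. -/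
def IsDuality (O : Set (Str σ ar)) (A : Str σ ar) : Prop :=
  ∀ B : Str σ ar, B.Hom A ↔ ∀ T ∈ O, ¬ T.Hom B

/-- `A` has caterpillar duality. -/
def HasCatDuality (A : Str σ ar) : Prop :=
  ∃ O : Set (Str σ ar), (∀ T ∈ O, T.IsCaterpillar) ∧ IsDuality O A

/-- `A` has path duality. -/
def HasPathDuality (A : Str σ ar) : Prop :=
  ∃ O : Set (Str σ ar), (∀ T ∈ O, T.IsPathStr) ∧ IsDuality O A

/-! The construction `Γ` on a deterministic automaton. -/

/-- The structure `Γ(D, {q₀}, T)`: universe is the set of subsets of `V(D)` containing `q₀`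
and disjoint from `T`; `(X_1,…,X_k) ∈ R(Γ D)` iff for all `(i,j)` and all `a ∈ X_i`,
every `b` with `(a,b) ∈ R^(i,j)(D)` lies in `X_j`. -/
def GammaStr (D : Str2 σ ar) (q0 : D.V) (T : Set D.V) : Str σ ar where
  V := { X : Set D.V // q0 ∈ X ∧ ∀ x ∈ X, x ∉ T }
  finiteV := by have : Finite D.V := D.finiteV; exact inferInstance
  rel := fun R => { t | ∀ (i j : Fin (ar R)) (a : D.V), a ∈ (t i).1 →
      ∀ b : D.V, (a, b) ∈ D.rel ⟨R, (i, j)⟩ → b ∈ (t j).1 }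

theorem test : True := trivial
/-- A caterpillar Datalog program: monadic linear Datalog with at most one EDB per rule.
A rule `(ρᵢ, ρⱼ, ⟨R, (m, n)⟩)` reads: `a ∈ ρᵢ ← b ∈ ρⱼ and (x₁,…,x_k) ∈ R with x_m = a, x_n = b`. -/
structure CatProgram (σ : Type) (ar : σ → ℕ) : Type 1 where
  IDB : Type
  finIDB : Finite IDB
  init : IDB
  rules : Set (IDB × IDB × Sig2 σ ar)
  goals : Set IDB

variable {σ : Type} [Finite σ] {ar : σ → ℕ}

/-- The least interpretation of the IDBs on an input structure `B`:
`Derives P B ρ a` means `a ∈ ρ` is derivable. -/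
inductive Derives (P : CatProgram σ ar) (B : Str σ ar) : P.IDB → B.V → Prop
  | init (b : B.V) : Derives P B P.init b
  | step (ρi ρj : P.IDB) (R : σ) (m n : Fin (ar R)) (t : Fin (ar R) → B.V) :
      (ρi, ρj, ⟨R, (m, n)⟩) ∈ P.rules → t ∈ B.rel R → Derives P B ρj (t n) →
      Derives P B ρi (t m)

/-- The program achieves its goal on `B` when the body IDB of some goal rule is nonempty. -/
def AchievesGoal (P : CatProgram σ ar) (B : Str σ ar) : Prop :=
  ∃ ρ ∈ P.goals, ∃ a : B.V, Derives P B ρ a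

/-- The nondeterministic automaton of a caterpillar Datalog program: states are the IDBs,
with a transition `(ρⱼ, ρᵢ) ∈ R^(n,m)` for each rule
`a ∈ ρᵢ ← b ∈ ρⱼ and (x₁,…,x_k) ∈ R with x_m = a, x_n = b`. -/
def progAut (P : CatProgram σ ar) : Str2 σ ar where
  V := P.IDB
  finiteV := P.finIDB
  rel := fun s => { p | (p.2, p.1, ⟨s.1, (s.2.2, s.2.1)⟩) ∈ P.rules }

/-! Auxiliary lemmas for Statement 9. -/

section Aux9

variable {σ : Type} [Finite σ] {ar : σ → ℕ}

/-- Homomorphism data from a path structure to `B`: a vertex map and tuple maps. -/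
def PathData (B : Str σ ar) (w : List (Sig2 σ ar)) (vm : Fin (w.length + 1) → B.V)
    (tp : ∀ t : Fin w.length, Fin (ar (w.get t).1) → B.V) : Prop :=
  (∀ t, tp t ∈ B.rel (w.get t).1) ∧
  (∀ t, tp t (w.get t).2.1 = vm t.castSucc) ∧
  (∀ t, tp t (w.get t).2.2 = vm t.succ)

/-- The underlying function on the plus-carrier built from path data. -/
noncomputable def mkF {B : Str σ ar} (w : List (Sig2 σ ar)) (vm : Fin (w.length + 1) → B.V)
    (tp : ∀ t : Fin w.length, Fin (ar (w.get t).1) → B.V) :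
    PlusCarrier (PathStr w) → B.V
  | Sum.inl v => vm v
  | Sum.inr ⟨s, ⟨⟨p, hp⟩, k⟩⟩ =>
      tp (Classical.choose hp)
        (Fin.cast (congrArg (fun x : Sig2 σ ar => ar x.1)
          (Classical.choose_spec hp).1.symm) k)

theorem mkF_inr {B : Str σ ar} {w : List (Sig2 σ ar)} (vm : Fin (w.length + 1) → B.V)
    (tp : ∀ t : Fin w.length, Fin (ar (w.get t).1) → B.V)
    (s : Sig2 σ ar) (p : (PathStr w).V × (PathStr w).V) (hp : p ∈ (PathStr w).rel s)
    (t' : Fin w.length) (h1 : w.get t' = s) (h2 : p = (t'.castSucc, t'.succ))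
    (k : Fin (ar s.1)) :
    mkF w vm tp (Sum.inr ⟨s, ⟨⟨p, hp⟩, k⟩⟩) =
      tp t' (Fin.cast (congrArg (fun x : Sig2 σ ar => ar x.1) h1.symm) k) := by
  obtain ⟨h1', h2'⟩ := Classical.choose_spec hp
  have hc : Classical.choose hp = t' := by
    have := h2'.symm.trans h2
    exact Fin.succ_injective _ (congrArg Prod.snd this)
  subst hc
  rfl

theorem hom_of_pathData {B : Str σ ar} {w : List (Sig2 σ ar)}
    {vm : Fin (w.length + 1) → B.V} {tp : ∀ t : Fin w.length, Fin (ar (w.get t).1) → B.V}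
    (h : PathData B w vm tp) : (strBetaStar (PathStr w)).Hom B := by
  obtain ⟨hrel, hl, hr⟩ := h
  have hresp : ∀ u v, PreRel (PathStr w) u v → mkF w vm tp u = mkF w vm tp v := by
    intro u v huv
    cases huv with
    | left s p =>
        obtain ⟨p, hp⟩ := p
        obtain ⟨t', h1, h2⟩ := id hp
        rw [mkF_inr vm tp s p hp t' h1 h2]
        subst h1
        subst h2
        exact hl t'
    | right s p =>
        obtain ⟨p, hp⟩ := p
        obtain ⟨t', h1, h2⟩ := id hp
        rw [mkF_inr vm tp s p hp t' h1 h2]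
        subst h1
        subst h2
        exact hr t'
  refine ⟨Quot.lift (mkF w vm tp) hresp, ?_⟩
  intro R τ hτ
  obtain ⟨i, j, p, hp, rfl⟩ := hτ
  obtain ⟨t', h1, h2⟩ := id hp
  show (fun m => mkF w vm tp (Sum.inr ⟨⟨R, (i, j)⟩, ⟨⟨p, hp⟩, m⟩⟩)) ∈ B.rel R
  rw [funext fun m => mkF_inr vm tp ⟨R, (i, j)⟩ p hp t' h1 h2 m]
  have hR : (w.get t').1 = R := congrArg Sigma.fst h1
  subst hR
  exact hrel t'

theorem pathMem (w : List (Sig2 σ ar)) (t : Fin w.length) :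
    ((t.castSucc, t.succ) : (PathStr w).V × (PathStr w).V) ∈ (PathStr w).rel (w.get t) :=
  ⟨t, rfl, rfl⟩

theorem pathData_of_hom {B : Str σ ar} {w : List (Sig2 σ ar)}
    (h : (strBetaStar (PathStr w)).Hom B) :
    ∃ (vm : Fin (w.length + 1) → B.V) (tp : ∀ t : Fin w.length, Fin (ar (w.get t).1) → B.V),
      PathData B w vm tp := by
  obtain ⟨g, hg⟩ := h
  refine ⟨fun v => g (Quot.mk _ (Sum.inl v)),
    fun t k => g (Quot.mk _ (Sum.inr ⟨w.get t, ⟨⟨(t.castSucc, t.succ), pathMem w t⟩, k⟩⟩)),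
    ?_, ?_, ?_⟩
  · intro t
    exact hg (w.get t).1
      (fun m => Quot.mk _ (Sum.inr ⟨w.get t, ⟨⟨(t.castSucc, t.succ), pathMem w t⟩, m⟩⟩))
      ⟨(w.get t).2.1, (w.get t).2.2, (t.castSucc, t.succ), pathMem w t, rfl⟩
  · intro t
    exact congrArg g (Quot.sound (PreRel.left (X := PathStr w) (w.get t) ⟨(t.castSucc, t.succ), pathMem w t⟩))
  · intro t
    exact congrArg g (Quot.sound (PreRel.right (X := PathStr w) (w.get t) ⟨(t.castSucc, t.succ), pathMem w t⟩))

/-- Partial run/homomorphism data suffix: a run on `w` from `ρ` to a goal state,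
together with path homomorphism data whose first vertex is `a`. -/
def TailData (P : CatProgram σ ar) (B : Str σ ar) (w : List (Sig2 σ ar))
    (ρ : P.IDB) (a : B.V) : Prop :=
  ∃ (f : Fin (w.length + 1) → P.IDB) (vm : Fin (w.length + 1) → B.V)
    (tp : ∀ t : Fin w.length, Fin (ar (w.get t).1) → B.V),
    f 0 = ρ ∧ f (Fin.last w.length) ∈ P.goals ∧ vm 0 = a ∧
    (∀ t : Fin w.length,
      (f t.succ, f t.castSucc, ⟨(w.get t).1, ((w.get t).2.2, (w.get t).2.1)⟩) ∈ P.rules) ∧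
    PathData B w vm tp

theorem tailData_cons {P : CatProgram σ ar} {B : Str σ ar} {w : List (Sig2 σ ar)}
    {ρi ρj : P.IDB} {R : σ} {m n : Fin (ar R)} {t : Fin (ar R) → B.V}
    (hrule : (ρi, ρj, ⟨R, (m, n)⟩) ∈ P.rules) (hrel : t ∈ B.rel R)
    (h : TailData P B w ρi (t m)) :
    TailData P B (⟨R, (n, m)⟩ :: w) ρj (t n) := by
  obtain ⟨f, vm, tp, hf0, hfl, hvm0, htr, hPrel, hPl, hPr⟩ := h
  have f' : Fin (w.length + 1 + 1) → P.IDB := Fin.cons ρj f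
  refine ⟨(Fin.cons (α := fun _ => P.IDB) ρj f : Fin (w.length + 1 + 1) → P.IDB),
    (Fin.cons (α := fun _ => B.V) (t n) vm : Fin (w.length + 1 + 1) → B.V),
    Fin.cases (motive := fun t' => Fin (ar (((⟨R, (n, m)⟩ : Sig2 σ ar) :: w).get t').1) → B.V)
      t tp, ?_, ?_, ?_, ?_, ?_, ?_, ?_⟩
  · simp
  · show Fin.cons (α := fun _ => P.IDB) ρj f (Fin.last (w.length + 1)) ∈ P.goals
    rw [show (Fin.last (w.length + 1)) = (Fin.last w.length).succ from (Fin.succ_last _).symm,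
      Fin.cons_succ]
    exact hfl
  · simp
  · intro t'
    induction t' using Fin.cases with
    | zero =>
        rw [Fin.cons_succ, Fin.castSucc_zero, Fin.cons_zero, hf0]
        exact hrule
    | succ u =>
        simp only [← Fin.succ_castSucc, Fin.cons_succ]
        exact htr u
  · intro t'
    induction t' using Fin.cases with
    | zero => exact hrel
    | succ u => exact hPrel u
  · intro t'
    induction t' using Fin.cases with
    | zero => rfl
    | succ u =>
        rw [← Fin.succ_castSucc, Fin.cons_succ]
        exact hPl u
  · intro t'
    induction t' using Fin.cases with
    | zero => exact hvm0.symm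
    | succ u => exact hPr u

end Aux9

/-- a caterpillar Datalog program `P` achieves its goal on `B` iff some word
`w` accepted by its automaton `(C, {ρ₁}, T)` describes a caterpillar `β*(P_w)` admitting a
homomorphism to `B`. -/
theorem stmt_9 (σ : Type) [Finite σ] (ar : σ → ℕ) (P : CatProgram σ ar) (B : Str σ ar) :
    AchievesGoal P B ↔
      ∃ w : List (Sig2 σ ar), NAccepts (progAut P) {P.init} P.goals w ∧
        (strBetaStar (PathStr w)).Hom B := by
  constructor
  · rintro ⟨ρ, hρ, a, hd⟩
    suffices H : ∀ (ρ : P.IDB) (a : B.V), Derives P B ρ a → ∀ w : List (Sig2 σ ar),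
        TailData P B w ρ a →
        ∃ w : List (Sig2 σ ar), NAccepts (progAut P) {P.init} P.goals w ∧
          (strBetaStar (PathStr w)).Hom B by
      refine H ρ a hd []
        ⟨fun _ => ρ, fun _ => a, fun t => t.elim0, rfl, hρ, rfl,
          fun t => t.elim0, fun t => t.elim0, fun t => t.elim0, fun t => t.elim0⟩
    intro ρ a hd
    induction hd with
    | init b =>
        rintro w ⟨f, vm, tp, hf0, hfl, hvm0, htr, hpd⟩
        refine ⟨w, ⟨f, ?_, hf0, hfl⟩, hom_of_pathData hpd⟩
        rintro s p ⟨u, rfl, rfl⟩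
        exact htr u
    | step ρi ρj R m n t hrule hrel _ ih =>
        intro w hw
        exact ih (⟨R, (n, m)⟩ :: w) (tailData_cons hrule hrel hw)
  · rintro ⟨w, ⟨f, htrans, hf0, hfl⟩, hhom⟩
    obtain ⟨vm, tp, hrel, hl, hr⟩ := pathData_of_hom hhom
    have key : ∀ k : Fin (w.length + 1), Derives P B (f k) (vm k) := by
      intro k
      induction k using Fin.induction with
      | zero =>
          have : f 0 = P.init := hf0
          rw [this]
          exact Derives.init _
      | succ u ih =>
          have hstep := htrans (w.get u) (u.castSucc, u.succ) (pathMem w u)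
          rw [← hr u]
          exact Derives.step (f u.succ) (f u.castSucc) (w.get u).1
            (w.get u).2.2 (w.get u).2.1 (tp u) hstep (hrel u) (by rw [hl u]; exact ih)
    exact ⟨f (Fin.last w.length), hfl, vm (Fin.last w.length), key (Fin.last w.length)⟩
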